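/- Let S be a finite set with |S| ≥ 3. Every rs function f ∈ F_U^P(S) is nondegenerate, restricts to a permutation of the collection of nonempty proper subsets of S, and is both union-subadditive and intersection-subadditive. -/

import Mathlib

open Classical

def unionSub {S : Type*} (f : Set S → Set S) : Prop :=
  ∀ X Y : Set S, f (X ∪ Y) ⊆ f X ∪ f Y

def interSub {S : Type*} (f : Set S → Set S) : Prop :=
  ∀ X Y : Set S, f (X ∩ Y) ⊆ f X ∪ f Y

noncomputable def fU {S : Type*} (σ : S → S) (X : Set S) : Set S :=
  if X = ∅ ∨ X = Set.univ then ∅ else σ '' X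

noncomputable def fUc {S : Type*} (σ : S → S) (X : Set S) : Set S :=
  fU σ (Set.univ \ X)

noncomputable def FUP (S : Type*) : Set (Set S → Set S) :=
  {f | ∃ σ : Equiv.Perm S, f = fU ⇑σ} ∪ {f | ∃ σ : Equiv.Perm S, f = fUc ⇑σ}

section Aux
variable {S : Type*} (σ : Equiv.Perm S)

lemma fU_of_proper {X : Set S} (h1 : X ≠ ∅) (h2 : X ≠ Set.univ) :
    fU ⇑σ X = σ '' X := by
  simp [fU, h1, h2]

lemma image_ne_empty {X : Set S} (h1 : X ≠ ∅) : ⇑σ '' X ≠ ∅ := by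
  simpa [Set.image_eq_empty]

lemma image_ne_univ {X : Set S} (h2 : X ≠ Set.univ) : ⇑σ '' X ≠ Set.univ := by
  intro h
  apply h2
  have := congrArg (fun T => σ.symm '' T) h
  simpa [Set.image_image] using this

lemma compl_ne_empty {X : Set S} (h2 : X ≠ Set.univ) : Set.univ \ X ≠ ∅ := by
  simp [Set.diff_eq_empty, Set.univ_subset_iff, h2]

lemma compl_ne_univ {X : Set S} (h1 : X ≠ ∅) : Set.univ \ X ≠ Set.univ := by
  rw [← Set.compl_eq_univ_diff]
  intro h
  exact h1 (by rwa [Set.compl_univ_iff] at h)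

lemma fUc_of_proper {X : Set S} (h1 : X ≠ ∅) (h2 : X ≠ Set.univ) :
    fUc ⇑σ X = σ '' (Set.univ \ X) := by
  rw [fUc, fU_of_proper σ (compl_ne_empty h2) (compl_ne_univ h1)]

lemma fU_unionSub : unionSub (fU ⇑σ) := by
  intro X Y
  by_cases h1 : X ∪ Y = ∅ ∨ X ∪ Y = Set.univ
  · simp only [fU, if_pos h1]; exact Set.empty_subset _
  rw [not_or] at h1
  obtain ⟨he, hu⟩ := h1
  rw [fU_of_proper σ he hu, Set.image_union]
  apply Set.union_subset_union
  · rcases eq_or_ne X ∅ with rfl | hX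
    · simp
    have hXu : X ≠ Set.univ := fun h => hu (by simp [h])
    rw [fU_of_proper σ hX hXu]
  · rcases eq_or_ne Y ∅ with rfl | hY
    · simp
    have hYu : Y ≠ Set.univ := fun h => hu (by simp [h])
    rw [fU_of_proper σ hY hYu]

lemma fU_interSub : interSub (fU ⇑σ) := by
  intro X Y
  by_cases h1 : X ∩ Y = ∅ ∨ X ∩ Y = Set.univ
  · simp only [fU, if_pos h1]; exact Set.empty_subset _
  rw [not_or] at h1
  obtain ⟨he, hu⟩ := h1
  rw [fU_of_proper σ he hu]
  rcases eq_or_ne X Set.univ with rfl | hXu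
  · simp only [Set.univ_inter] at he hu ⊢
    rw [fU_of_proper σ he hu]
    exact Set.subset_union_right
  · have hX : X ≠ ∅ := by
      intro h; exact he (by simp [h])
    rw [fU_of_proper σ hX hXu]
    exact (Set.image_mono Set.inter_subset_left).trans Set.subset_union_left

lemma fUc_unionSub : unionSub (fUc ⇑σ) := by
  intro X Y
  have h : Set.univ \ (X ∪ Y) = (Set.univ \ X) ∩ (Set.univ \ Y) := by
    ext x; by_cases hx : x ∈ X <;> simp [hx]
  simpa [fUc, h] using fU_interSub σ (Set.univ \ X) (Set.univ \ Y)

lemma fUc_interSub : interSub (fUc ⇑σ) := by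
  intro X Y
  have h : Set.univ \ (X ∩ Y) = (Set.univ \ X) ∪ (Set.univ \ Y) := by
    ext x; by_cases hx : x ∈ X <;> simp [hx]
  simpa [fUc, h] using fU_unionSub σ (Set.univ \ X) (Set.univ \ Y)

lemma fU_bijOn : Set.BijOn (fU ⇑σ) {X : Set S | X ≠ ∅ ∧ X ≠ Set.univ}
    {X : Set S | X ≠ ∅ ∧ X ≠ Set.univ} := by
  refine ⟨?_, ?_, ?_⟩
  · rintro X ⟨h1, h2⟩
    rw [fU_of_proper σ h1 h2]
    exact ⟨image_ne_empty σ h1, image_ne_univ σ h2⟩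
  · rintro X ⟨hX1, hX2⟩ Y ⟨hY1, hY2⟩ h
    rw [fU_of_proper σ hX1 hX2, fU_of_proper σ hY1 hY2] at h
    exact Set.image_injective.mpr σ.injective h
  · rintro Y ⟨hY1, hY2⟩
    refine ⟨σ.symm '' Y, ⟨image_ne_empty σ.symm hY1, image_ne_univ σ.symm hY2⟩, ?_⟩
    rw [fU_of_proper σ (image_ne_empty σ.symm hY1) (image_ne_univ σ.symm hY2)]
    simp [Set.image_image]

lemma fUc_bijOn : Set.BijOn (fUc ⇑σ) {X : Set S | X ≠ ∅ ∧ X ≠ Set.univ}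
    {X : Set S | X ≠ ∅ ∧ X ≠ Set.univ} := by
  refine ⟨?_, ?_, ?_⟩
  · rintro X ⟨h1, h2⟩
    rw [fUc_of_proper σ h1 h2]
    exact ⟨image_ne_empty σ (compl_ne_empty h2), image_ne_univ σ (compl_ne_univ h1)⟩
  · rintro X ⟨hX1, hX2⟩ Y ⟨hY1, hY2⟩ h
    rw [fUc_of_proper σ hX1 hX2, fUc_of_proper σ hY1 hY2] at h
    have := Set.image_injective.mpr σ.injective h
    have := congrArg (fun T => Set.univ \ T) this
    simpa [Set.diff_diff_cancel_left] using this
  · rintro Y ⟨hY1, hY2⟩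
    have h1 : Set.univ \ (σ.symm '' Y) ≠ ∅ :=
      compl_ne_empty (image_ne_univ σ.symm hY2)
    have h2 : Set.univ \ (σ.symm '' Y) ≠ Set.univ :=
      compl_ne_univ (image_ne_empty σ.symm hY1)
    refine ⟨Set.univ \ (σ.symm '' Y), ⟨h1, h2⟩, ?_⟩
    rw [fUc_of_proper σ h1 h2, Set.diff_diff_cancel_left (by simp)]
    simp [Set.image_image]

end Aux

theorem stmt3 {S : Type*} [Fintype S] (hS : 3 ≤ Fintype.card S)
    (f : Set S → Set S) (hf : f ∈ FUP S) :
    (f ∅ = ∅ ∧ f Set.univ = ∅) ∧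
    Set.BijOn f {X : Set S | X ≠ ∅ ∧ X ≠ Set.univ} {X : Set S | X ≠ ∅ ∧ X ≠ Set.univ} ∧
    unionSub f ∧ interSub f := by
  rcases hf with ⟨σ, rfl⟩ | ⟨σ, rfl⟩
  · exact ⟨⟨by simp [fU], by simp [fU]⟩, fU_bijOn σ, fU_unionSub σ, fU_interSub σ⟩
  · exact ⟨⟨by simp [fUc, fU], by simp [fUc, fU]⟩, fUc_bijOn σ, fUc_unionSub σ, fUc_interSub σ⟩
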